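/- Corollary 4.2, planar case (Thistlethwaite's relation, ribbon-graph form). Let G = (H, σ, θ) be a combinatorial map encoding an orientable ribbon graph satisfying k(E) − bc(E) + n(E) = 0 (i.e., the surface G has genus zero), let K be a field, let u be a nonzero element of K with u⁴ ≠ −1, and set t = u⁴ and d = −u² − u^{−2}. Then for every integer w, (−1)^w · u^{3w} · Σ_{F ⊆ E} u^{e(G)−2e(F)} · d^{bc(F)−1} = (−1)^w · u^{3w − r(G) + n(G)} · d^{k(G)−1} · Σ_{F ⊆ E} (−t−1)^{r(G)−r(F)} · (−t^{−1}−1)^{n(F)}, where the last sum is the Tutte polynomial T_Γ(−t, −t^{−1}) of the core graph Γ of G in its Whitney rank subset expansion T_Γ(x,y) = Σ_{F ⊆ E} (x−1)^{r(G)−r(F)} (y−1)^{n(F)}. (When w is the writhe of an oriented alternating link diagram L with associated planar ribbon graph G, the left-hand side is the Jones polynomial J_L(t) and the identity is the classical relation J_L(t) = (−1)^w t^{(3w−r(G)+n(G))/4} (−t^{1/2}−t^{−1/2})^{k(G)−1} T_Γ(−t, −t^{−1}).) -/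

import Mathlib

open Finset
open scoped Classical

/-- The permutation `θ_F` acting as `θ` on the half-edges belonging to edges of the
spanning subgraph (encoded by the `θ`-invariant set `S` of half-edges) and as the
identity elsewhere.  Defined whenever `S` is `θ`-invariant and `θ` is an involution
(and as the identity permutation otherwise). -/
noncomputable def restrictPerm {H : Type*} [DecidableEq H] (θ : Equiv.Perm H) (S : Finset H) :
    Equiv.Perm H :=
  if hcl : (∀ a ∈ S, θ a ∈ S) ∧ (∀ a, θ (θ a) = a) then
    { toFun := fun a => if a ∈ S then θ a else a
      invFun := fun a => if a ∈ S then θ a else a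
      left_inv := fun a => by
        by_cases h : a ∈ S
        · simp [h, hcl.1 a h, hcl.2 a]
        · simp [h]
      right_inv := fun a => by
        by_cases h : a ∈ S
        · simp [h, hcl.1 a h, hcl.2 a]
        · simp [h] }
  else 1

/-- The number of orbits of the cyclic group generated by a permutation. -/
noncomputable def permOrbits {H : Type*} [Fintype H] (π : Equiv.Perm H) : ℕ :=
  Nat.card (MulAction.orbitRel.Quotient (Subgroup.zpowers π) H)

/-- `v(G)`: the number of vertices, i.e. the number of orbits of `σ`. -/
noncomputable def vCount {H : Type*} [Fintype H] (σ : Equiv.Perm H) : ℕ := permOrbits σ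

/-- `bc(F)`: the number of boundary components of the spanning subgraph, i.e. the
number of orbits of `σ ∘ θ_F`. -/
noncomputable def bcCount {H : Type*} [Fintype H] [DecidableEq H]
    (σ θ : Equiv.Perm H) (S : Finset H) : ℕ :=
  permOrbits (σ * restrictPerm θ S)

/-- `k(F)`: the number of connected components of the spanning subgraph, i.e. the
number of orbits of the subgroup generated by `σ` and `θ_F`. -/
noncomputable def kCount {H : Type*} [Fintype H] [DecidableEq H]
    (σ θ : Equiv.Perm H) (S : Finset H) : ℕ :=
  Nat.card (MulAction.orbitRel.Quotient
    (Subgroup.closure {σ, restrictPerm θ S} : Subgroup (Equiv.Perm H)) H)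

/-- `e(F)`: the number of edges of the spanning subgraph, i.e. half the number of
half-edges in `S` (as an integer, for use in exponents). -/
def eCount {H : Type*} (S : Finset H) : ℤ := (S.card / 2 : ℕ)

/-- `r(F) = v(G) - k(F)`: the rank of the spanning subgraph. -/
noncomputable def rCount {H : Type*} [Fintype H] [DecidableEq H]
    (σ θ : Equiv.Perm H) (S : Finset H) : ℤ :=
  (vCount σ : ℤ) - (kCount σ θ S : ℤ)

/-- `n(F) = e(F) - r(F)`: the nullity of the spanning subgraph. -/
noncomputable def nCount {H : Type*} [Fintype H] [DecidableEq H]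
    (σ θ : Equiv.Perm H) (S : Finset H) : ℤ :=
  eCount S - rCount σ θ S

/-- The spanning subgraphs `F ⊆ E`, encoded as the `θ`-invariant subsets of the
set of half-edges. -/
def spanningSets {H : Type*} [Fintype H] [DecidableEq H] (θ : Equiv.Perm H) :
    Finset (Finset H) :=
  Finset.univ.filter (fun S => ∀ a ∈ S, θ a ∈ S)

open Equiv

section Counting
variable {H : Type*}

private lemma quot_card_le [Finite H] {s t : Setoid H}
    (h : ∀ x y, s x y → t x y) :
    Nat.card (Quotient t) ≤ Nat.card (Quotient s) := by
  apply Nat.card_le_card_of_surjective (Quotient.map' id (fun x y hxy => h x y hxy))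
  intro q
  obtain ⟨x, rfl⟩ := Quotient.exists_rep q
  exact ⟨Quotient.mk'' x, rfl⟩

private lemma quot_card_lt [Finite H] {s t : Setoid H}
    (h : ∀ x y, s x y → t x y) {a b : H} (hab : t a b) (hnab : ¬ s a b) :
    Nat.card (Quotient t) < Nat.card (Quotient s) := by
  haveI : Fintype H := Fintype.ofFinite H
  haveI : Fintype (Quotient s) := Quotient.fintype s
  haveI : Fintype (Quotient t) := Quotient.fintype t
  set f : Quotient s → Quotient t := Quotient.map' id (fun x y hxy => h x y hxy) with hf
  have hsurj : Function.Surjective f := by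
    intro q
    obtain ⟨x, rfl⟩ := Quotient.exists_rep q
    exact ⟨Quotient.mk'' x, rfl⟩
  rw [Nat.card_eq_fintype_card, Nat.card_eq_fintype_card]
  rcases lt_or_eq_of_le (Fintype.card_le_of_surjective f hsurj) with h' | h'
  · exact h'
  · exfalso
    have hbij : Function.Bijective f :=
      (Fintype.bijective_iff_surjective_and_card f).2 ⟨hsurj, h'.symm⟩
    have : (Quotient.mk'' a : Quotient s) = Quotient.mk'' b := by
      apply hbij.1
      exact Quotient.sound' hab
    exact hnab (Quotient.exact' this)

/-- The join of an equivalence relation with a single pair `(a, b)`. -/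
private def pairJoin (s : Setoid H) (a b : H) : Setoid H where
  r x y := s x y ∨ (s x a ∧ s b y) ∨ (s x b ∧ s a y)
  iseqv := by
    constructor
    · intro x; exact Or.inl (s.refl x)
    · rintro x y (h | ⟨h1, h2⟩ | ⟨h1, h2⟩)
      · exact Or.inl (s.symm h)
      · exact Or.inr (Or.inr ⟨s.symm h2, s.symm h1⟩)
      · exact Or.inr (Or.inl ⟨s.symm h2, s.symm h1⟩)
    · rintro x y z (h | ⟨h1, h2⟩ | ⟨h1, h2⟩) (g | ⟨g1, g2⟩ | ⟨g1, g2⟩)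
      · exact Or.inl (s.trans h g)
      · exact Or.inr (Or.inl ⟨s.trans h g1, g2⟩)
      · exact Or.inr (Or.inr ⟨s.trans h g1, g2⟩)
      · exact Or.inr (Or.inl ⟨h1, s.trans h2 g⟩)
      · exact Or.inl (s.trans (s.trans h1 (s.symm (s.trans h2 g1))) g2)
      · exact Or.inl (s.trans h1 g2)
      · exact Or.inr (Or.inr ⟨h1, s.trans h2 g⟩)
      · exact Or.inl (s.trans h1 g2)
      · exact Or.inl (s.trans (s.trans h1 (s.symm (s.trans h2 g1))) g2)

private lemma pairJoin_rel_iff {s : Setoid H} {a b x y : H} :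
    pairJoin s a b x y ↔ s x y ∨ (s x a ∧ s b y) ∨ (s x b ∧ s a y) := Iff.rfl

private lemma le_pairJoin {s : Setoid H} {a b : H} : ∀ x y, s x y → pairJoin s a b x y :=
  fun _ _ h => Or.inl h

private lemma pairJoin_rel_ab (s : Setoid H) (a b : H) : pairJoin s a b a b :=
  Or.inr (Or.inl ⟨s.refl a, s.refl b⟩)

private lemma card_pairJoin [Finite H] (s : Setoid H) (a b : H) :
    Nat.card (Quotient s) ≤ Nat.card (Quotient (pairJoin s a b)) + 1 := by
  haveI : Fintype H := Fintype.ofFinite H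
  haveI : Fintype (Quotient s) := Quotient.fintype s
  haveI : Fintype (Quotient (pairJoin s a b)) := Quotient.fintype _
  set f : Quotient s → Quotient (pairJoin s a b) :=
    Quotient.map' id (fun x y hxy => le_pairJoin x y hxy) with hf
  have key : (Finset.univ.erase (Quotient.mk'' b : Quotient s)).card ≤
      (Finset.univ : Finset (Quotient (pairJoin s a b))).card := by
    apply Finset.card_le_card_of_injOn f (fun _ _ => Finset.mem_univ _)
    intro c hc d hd hcd
    induction c using Quotient.inductionOn' with | h x =>
    induction d using Quotient.inductionOn' with | h y =>
    have hrel : pairJoin s a b x y := Quotient.exact' hcd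
    rcases hrel with h | ⟨h1, h2⟩ | ⟨h1, h2⟩
    · exact Quotient.sound' h
    · exact absurd (Quotient.sound' (s.symm h2) : (Quotient.mk'' y : Quotient s) = _)
        (by simpa using (Finset.mem_erase.1 hd).1)
    · exact absurd (Quotient.sound' h1 : (Quotient.mk'' x : Quotient s) = _)
        (by simpa using (Finset.mem_erase.1 hc).1)
  rw [Finset.card_erase_of_mem (Finset.mem_univ _)] at key
  rw [Nat.card_eq_fintype_card, Nat.card_eq_fintype_card, ← Finset.card_univ,
    ← Finset.card_univ (α := Quotient (pairJoin s a b))]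
  omega

end Counting

section PermFacts
variable {H : Type*} [Fintype H] [DecidableEq H]

private lemma orbitRel_iff {G : Subgroup (Perm H)} {x y : H} :
    MulAction.orbitRel G H x y ↔ ∃ g ∈ G, g y = x := by
  change x ∈ MulAction.orbit G y ↔ _
  rw [MulAction.mem_orbit_iff]
  constructor
  · rintro ⟨⟨g, hg⟩, h⟩; exact ⟨g, hg, h⟩
  · rintro ⟨g, hg, h⟩; exact ⟨⟨g, hg⟩, h⟩

private lemma orbitRel_zpowers_iff {π : Perm H} {x y : H} :
    MulAction.orbitRel (Subgroup.zpowers π) H x y ↔ π.SameCycle y x := by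
  rw [orbitRel_iff]
  constructor
  · rintro ⟨g, hg, h⟩
    obtain ⟨k, rfl⟩ := Subgroup.mem_zpowers_iff.1 hg
    exact ⟨k, h⟩
  · rintro ⟨k, h⟩
    exact ⟨π ^ k, Subgroup.mem_zpowers_iff.2 ⟨k, rfl⟩, h⟩

private lemma sameCycle_of_rel_pow {π : Perm H} {t : Setoid H}
    (hstep : ∀ x, t x (π x)) : ∀ (n : ℕ) (x : H), t x ((π ^ n) x) := by
  intro n
  induction n with
  | zero => intro x; simp only [pow_zero, Perm.one_apply]; exact t.refl x
  | succ n ih =>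
    intro x
    have : (π ^ (n + 1)) x = (π ^ n) (π x) := by
      rw [pow_succ]; simp [Perm.mul_apply]
    rw [this]
    exact t.trans (hstep x) (ih (π x))

private lemma rel_of_sameCycle {π : Perm H} {t : Setoid H}
    (hstep : ∀ x, t x (π x)) {x y : H} (h : π.SameCycle x y) : t x y := by
  obtain ⟨i, _, _, hi⟩ := h.exists_pow_eq π
  rw [← hi]
  exact sameCycle_of_rel_pow hstep i x

private lemma orbits_mul_swap_le (π : Perm H) (a b : H) :
    Nat.card (Quotient (MulAction.orbitRel (Subgroup.zpowers (π * Equiv.swap a b)) H))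
      ≤ Nat.card (Quotient (MulAction.orbitRel (Subgroup.zpowers π) H)) + 1 := by
  set τ := Equiv.swap a b with hτ
  set s' := MulAction.orbitRel (Subgroup.zpowers (π * τ)) H with hs'
  set t := pairJoin s' a b with htdef
  have hstep : ∀ x, t x (π x) := by
    intro x
    have h1 : t x (τ x) := by
      rcases eq_or_ne x a with h | hxa
      · rw [h, hτ, Equiv.swap_apply_left]
        exact pairJoin_rel_ab s' a b
      rcases eq_or_ne x b with h | hxb
      · rw [h, hτ, Equiv.swap_apply_right]
        exact t.symm (pairJoin_rel_ab s' a b)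
      · rw [hτ, Equiv.swap_apply_of_ne_of_ne hxa hxb]
    have h2 : t (π x) (τ x) := by
      apply le_pairJoin
      rw [hs', orbitRel_zpowers_iff]
      exact ⟨1, by simp [hτ, Perm.mul_apply]⟩
    exact t.trans h1 (t.symm h2)
  calc Nat.card (Quotient s') ≤ Nat.card (Quotient t) + 1 := card_pairJoin s' a b
    _ ≤ Nat.card (Quotient (MulAction.orbitRel (Subgroup.zpowers π) H)) + 1 := by
        apply Nat.add_le_add_right
        apply quot_card_le
        intro x y hxy
        have hsc : π.SameCycle y x := orbitRel_zpowers_iff.1 hxy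
        exact t.symm (rel_of_sameCycle hstep hsc)

private lemma sameCycle_swap_merge {π : Perm H} {a b : H} (hab : a ≠ b)
    (hnot : ¬ π.SameCycle a b) : (π * Equiv.swap a b).SameCycle a b := by
  set τ := Equiv.swap a b with hτ
  have hex : ∃ j : ℕ, (π ^ (j + 1)) b = b := by
    refine ⟨orderOf π - 1, ?_⟩
    have : orderOf π - 1 + 1 = orderOf π := Nat.succ_pred_eq_of_pos (orderOf_pos π)
    rw [this, pow_orderOf_eq_one]; rfl
  set m := Nat.find hex + 1 with hm
  have hmin : ∀ j, j < Nat.find hex → (π ^ (j + 1)) b ≠ b := fun j hj => Nat.find_min hex hj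
  have hnota : ∀ j : ℕ, (π ^ j) b ≠ a := by
    intro j hj
    exact hnot (Perm.SameCycle.symm ⟨(j : ℤ), by rw [zpow_natCast]; exact hj⟩)
  have key : ∀ j, 1 ≤ j → j ≤ m → ((π * τ) ^ j) a = (π ^ j) b := by
    intro j hj1 hjm
    induction j with
    | zero => omega
    | succ j ih =>
      rcases Nat.eq_or_lt_of_le hj1 with h1 | h1
      · have hj0 : j = 0 := by omega
        subst hj0
        simp only [zero_add, pow_one, Perm.mul_apply, hτ, Equiv.swap_apply_left]
      · have hj : 1 ≤ j := by omega
        have hjm' : j ≤ m := by omega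
        have ihj := ih hj hjm'
        have hne_b : (π ^ j) b ≠ b := by
          have hlt : j - 1 < Nat.find hex := by omega
          have hx := hmin (j - 1) hlt
          have hj1' : j - 1 + 1 = j := by omega
          rwa [hj1'] at hx
        have hne_a : (π ^ j) b ≠ a := hnota j
        calc ((π * τ) ^ (j + 1)) a = (π * τ) (((π * τ) ^ j) a) := by
              rw [pow_succ']; exact rfl
          _ = π (τ ((π ^ j) b)) := by rw [ihj]; exact rfl
          _ = π ((π ^ j) b) := by rw [hτ, Equiv.swap_apply_of_ne_of_ne hne_a hne_b]
          _ = (π ^ (j + 1)) b := by rw [pow_succ']; exact rfl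
  have hfin : ((π * τ) ^ m) a = b := by
    rw [key m (by omega) le_rfl, hm, Nat.find_spec hex]
  exact ⟨(m : ℤ), by rw [zpow_natCast]; exact hfin⟩

private lemma sameCycle_le_swap {π : Perm H} {a b : H} (hab : a ≠ b)
    (hnot : ¬ π.SameCycle a b) {x y : H} (h : π.SameCycle x y) :
    (π * Equiv.swap a b).SameCycle x y := by
  set τ := Equiv.swap a b with hτ
  have hmerge : (π * τ).SameCycle a b := sameCycle_swap_merge hab hnot
  set t : Setoid H := MulAction.orbitRel (Subgroup.zpowers (π * τ)) H with ht
  have trel : ∀ u v : H, (π * τ).SameCycle u v → t u v := by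
    intro u v huv
    rw [ht, orbitRel_zpowers_iff]
    exact huv.symm
  have happ : ∀ u : H, t u ((π * τ) u) := fun u => trel u ((π * τ) u) ⟨1, by simp⟩
  have hstep : ∀ x, t x (π x) := by
    intro x
    rcases eq_or_ne x a with hx | hxa
    · rw [hx]
      have heq : π a = (π * τ) b := by
        simp only [Perm.mul_apply, hτ, Equiv.swap_apply_right]
      rw [heq]
      exact t.trans (trel a b hmerge) (happ b)
    rcases eq_or_ne x b with hx | hxb
    · rw [hx]
      have heq : π b = (π * τ) a := by
        simp only [Perm.mul_apply, hτ, Equiv.swap_apply_left]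
      rw [heq]
      exact t.trans (t.symm (trel a b hmerge)) (happ a)
    · have heq : π x = (π * τ) x := by
        simp only [Perm.mul_apply, hτ, Equiv.swap_apply_of_ne_of_ne hxa hxb]
      rw [heq]
      exact happ x
  have hxy : t x y := rel_of_sameCycle hstep h
  rw [ht, orbitRel_zpowers_iff] at hxy
  exact hxy.symm

private lemma orbits_mul_swap_lt {π : Perm H} {a b : H} (hab : a ≠ b)
    (hnot : ¬ π.SameCycle a b) :
    Nat.card (Quotient (MulAction.orbitRel (Subgroup.zpowers (π * Equiv.swap a b)) H))
      < Nat.card (Quotient (MulAction.orbitRel (Subgroup.zpowers π) H)) := by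
  apply quot_card_lt (a := a) (b := b)
  · intro x y hxy
    rw [orbitRel_zpowers_iff] at hxy ⊢
    exact sameCycle_le_swap hab hnot hxy
  · rw [orbitRel_zpowers_iff]
    exact (sameCycle_swap_merge hab hnot).symm
  · rw [orbitRel_zpowers_iff]
    intro h
    exact hnot h.symm

end PermFacts

section KSide
variable {H : Type*} [Fintype H] [DecidableEq H]

private lemma rel_of_mem {G : Subgroup (Perm H)} {g : Perm H} (hg : g ∈ G) (x : H) :
    MulAction.orbitRel G H (g x) x := orbitRel_iff.2 ⟨g, hg, rfl⟩

private lemma closure_rel_le {s : Set (Perm H)} {t : Setoid H}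
    (hgen : ∀ g ∈ s, ∀ x, t (g x) x) :
    ∀ x y, MulAction.orbitRel (Subgroup.closure s) H x y → t x y := by
  have main : ∀ g ∈ Subgroup.closure s, ∀ x, t (g x) x := by
    intro g hg
    induction hg using Subgroup.closure_induction with
    | mem g hgs => exact hgen g hgs
    | one => intro x; exact t.refl x
    | mul g h _ _ pg ph => intro x; exact t.trans (pg (h x)) (ph x)
    | inv g _ pg =>
      intro x
      have h1 := pg (g⁻¹ x)
      rw [show g (g⁻¹ x) = x from Equiv.Perm.eq_inv_iff_eq.1 rfl] at h1
      exact t.symm h1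
  intro x y hxy
  obtain ⟨g, hg, hgy⟩ := orbitRel_iff.1 hxy
  rw [← hgy]
  exact main g hg y

private lemma kCount_eq (σ θ : Perm H) (S : Finset H) : kCount σ θ S =
    Nat.card (Quotient (MulAction.orbitRel
      (Subgroup.closure {σ, restrictPerm θ S} : Subgroup (Perm H)) H)) := rfl

private lemma bcCount_eq (σ θ : Perm H) (S : Finset H) : bcCount σ θ S =
    Nat.card (Quotient (MulAction.orbitRel
      (Subgroup.zpowers (σ * restrictPerm θ S)) H)) := rfl

private lemma restrictPerm_apply {θ : Perm H} {S : Finset H}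
    (hS : ∀ a ∈ S, θ a ∈ S) (hinv : ∀ a, θ (θ a) = a) (x : H) :
    restrictPerm θ S x = if x ∈ S then θ x else x := by
  unfold restrictPerm
  rw [dif_pos ⟨hS, hinv⟩]
  rfl

private lemma restrictPerm_empty (θ : Perm H) (hinv : ∀ a, θ (θ a) = a) :
    restrictPerm θ (∅ : Finset H) = 1 := by
  apply Equiv.ext
  intro x
  rw [restrictPerm_apply (fun a ha => absurd ha (Finset.notMem_empty a)) hinv]
  simp

private lemma insert_closed {θ : Perm H} {S : Finset H}
    (hS : ∀ x ∈ S, θ x ∈ S) (hinv : ∀ a, θ (θ a) = a) (a : H) :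
    ∀ x ∈ insert a (insert (θ a) S), θ x ∈ insert a (insert (θ a) S) := by
  intro x hx
  simp only [Finset.mem_insert] at hx ⊢
  rcases hx with rfl | rfl | hx
  · exact Or.inr (Or.inl rfl)
  · exact Or.inl (hinv a)
  · exact Or.inr (Or.inr (hS x hx))

private lemma restrictPerm_insert {θ : Perm H} {S : Finset H}
    (hS : ∀ a ∈ S, θ a ∈ S) (hinv : ∀ a, θ (θ a) = a) {a : H}
    (ha : a ∉ S) (hb : θ a ∉ S) :
    restrictPerm θ (insert a (insert (θ a) S)) = restrictPerm θ S * Equiv.swap a (θ a) := by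
  apply Equiv.ext
  intro x
  rw [Equiv.Perm.mul_apply, restrictPerm_apply (insert_closed hS hinv a) hinv,
    restrictPerm_apply hS hinv]
  rcases eq_or_ne x a with rfl | hxa
  · rw [Equiv.swap_apply_left, if_pos (Finset.mem_insert_self _ _), if_neg hb]
  rcases eq_or_ne x (θ a) with rfl | hxb
  · rw [Equiv.swap_apply_right, if_pos (by simp), if_neg ha, hinv]
  · rw [Equiv.swap_apply_of_ne_of_ne hxa hxb]
    by_cases hxS : x ∈ S
    · rw [if_pos hxS, if_pos (by simp [hxS])]
    · rw [if_neg hxS, if_neg (by simp [hxS, hxa, hxb])]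

private lemma eCount_insert {θ : Perm H} {S : Finset H} {a : H}
    (ha : a ∉ S) (hb : θ a ∉ S) (hfa : θ a ≠ a) :
    eCount (insert a (insert (θ a) S)) = eCount S + 1 := by
  have hcard : (insert a (insert (θ a) S)).card = S.card + 2 := by
    rw [Finset.card_insert_of_notMem
        (by simp only [Finset.mem_insert]; push_neg; exact ⟨Ne.symm hfa, ha⟩),
      Finset.card_insert_of_notMem hb]
  unfold eCount
  rw [hcard]
  have : (S.card + 2) / 2 = S.card / 2 + 1 := Nat.add_div_right _ (by norm_num)
  rw [this]
  push_cast
  ring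

private lemma step_ineq (σ θ : Perm H) (hinv : ∀ a, θ (θ a) = a) {S : Finset H}
    (hS : ∀ x ∈ S, θ x ∈ S) {a : H} (ha : a ∉ S) (hfa : θ a ≠ a) (hb : θ a ∉ S) :
    2 * (kCount σ θ S : ℤ) + eCount S - (bcCount σ θ S : ℤ) ≤
    2 * (kCount σ θ (insert a (insert (θ a) S)) : ℤ)
      + eCount (insert a (insert (θ a) S))
      - (bcCount σ θ (insert a (insert (θ a) S)) : ℤ) := by
  set b := θ a with hbdef
  set ρ := restrictPerm θ S with hρ
  have hab : a ≠ b := fun h => hfa h.symm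
  have hρ' : restrictPerm θ (insert a (insert b S)) = ρ * Equiv.swap a b :=
    restrictPerm_insert hS hinv ha hb
  have he : eCount (insert a (insert b S)) = eCount S + 1 := eCount_insert ha hb hfa
  have hσmem : σ ∈ Subgroup.closure ({σ, ρ} : Set (Perm H)) :=
    Subgroup.subset_closure (Set.mem_insert _ _)
  have hρmem : ρ ∈ Subgroup.closure ({σ, ρ} : Set (Perm H)) :=
    Subgroup.subset_closure (Set.mem_insert_of_mem _ rfl)
  set sS : Setoid H := MulAction.orbitRel (Subgroup.closure ({σ, ρ} : Set (Perm H))) H with hsS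
  have hk := kCount_eq σ θ S
  have hk' := kCount_eq σ θ (insert a (insert b S))
  have hbc := bcCount_eq σ θ S
  have hbc' := bcCount_eq σ θ (insert a (insert b S))
  rw [hρ'] at hk' hbc'
  have hassoc : σ * (ρ * Equiv.swap a b) = (σ * ρ) * Equiv.swap a b := (mul_assoc _ _ _).symm
  rw [hassoc] at hbc'
  -- generator fact for ρ * swap in terms of a target setoid
  by_cases hrel : sS a b
  · -- same component: k' ≥ k and bc' ≤ bc + 1
    have h1 : ∀ x y,
        MulAction.orbitRel (Subgroup.closure ({σ, ρ * Equiv.swap a b} : Set (Perm H))) H x y →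
        sS x y := by
      apply closure_rel_le
      rintro g (rfl | rfl)
      · exact fun x => rel_of_mem hσmem x
      · intro x
        have happ : (ρ * Equiv.swap a b) x = ρ (Equiv.swap a b x) := rfl
        rcases eq_or_ne x a with hx | hxa
        · rw [hx, show (ρ * Equiv.swap a b) a = ρ b from by rw [Equiv.Perm.mul_apply, Equiv.swap_apply_left]]
          exact sS.trans (rel_of_mem hρmem b) (sS.symm hrel)
        rcases eq_or_ne x b with hx | hxb
        · rw [hx, show (ρ * Equiv.swap a b) b = ρ a from by rw [Equiv.Perm.mul_apply, Equiv.swap_apply_right]]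
          exact sS.trans (rel_of_mem hρmem a) hrel
        · rw [happ, Equiv.swap_apply_of_ne_of_ne hxa hxb]
          exact rel_of_mem hρmem x
    have hkk : kCount σ θ S ≤ kCount σ θ (insert a (insert b S)) := by
      rw [hk, hk']
      exact quot_card_le h1
    have hbcc : (bcCount σ θ (insert a (insert b S)) : ℕ) ≤ bcCount σ θ S + 1 := by
      rw [hbc, hbc']
      exact orbits_mul_swap_le (σ * ρ) a b
    rw [he]
    push_cast at hbcc ⊢
    have hkk' : (kCount σ θ S : ℤ) ≤ kCount σ θ (insert a (insert b S)) := by exact_mod_cast hkk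
    linarith
  · -- different components: k' ≥ k - 1 and bc' ≤ bc - 1
    have h1 : ∀ x y,
        MulAction.orbitRel (Subgroup.closure ({σ, ρ * Equiv.swap a b} : Set (Perm H))) H x y →
        pairJoin sS a b x y := by
      apply closure_rel_le
      rintro g (rfl | rfl)
      · exact fun x => pairJoin_rel_iff.2 (Or.inl (rel_of_mem hσmem x))
      · intro x
        have happ : (ρ * Equiv.swap a b) x = ρ (Equiv.swap a b x) := rfl
        rcases eq_or_ne x a with hx | hxa
        · rw [hx, show (ρ * Equiv.swap a b) a = ρ b from by rw [Equiv.Perm.mul_apply, Equiv.swap_apply_left]]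
          exact pairJoin_rel_iff.2 (Or.inr (Or.inr ⟨rel_of_mem hρmem b, sS.refl a⟩))
        rcases eq_or_ne x b with hx | hxb
        · rw [hx, show (ρ * Equiv.swap a b) b = ρ a from by rw [Equiv.Perm.mul_apply, Equiv.swap_apply_right]]
          exact pairJoin_rel_iff.2 (Or.inr (Or.inl ⟨rel_of_mem hρmem a, sS.refl b⟩))
        · rw [happ, Equiv.swap_apply_of_ne_of_ne hxa hxb]
          exact pairJoin_rel_iff.2 (Or.inl (rel_of_mem hρmem x))
    have hkk : kCount σ θ S ≤ kCount σ θ (insert a (insert b S)) + 1 := by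
      rw [hk, hk']
      calc Nat.card (Quotient sS) ≤ Nat.card (Quotient (pairJoin sS a b)) + 1 :=
            card_pairJoin sS a b
        _ ≤ _ + 1 := Nat.add_le_add_right (quot_card_le h1) 1
    have hnsc : ¬ (σ * ρ).SameCycle a b := by
      intro hsc
      obtain ⟨i, hi⟩ := hsc
      apply hrel
      apply sS.symm
      exact orbitRel_iff.2 ⟨(σ * ρ) ^ i, Subgroup.zpow_mem _ (Subgroup.mul_mem _ hσmem hρmem) i, hi⟩
    have hbcc : (bcCount σ θ (insert a (insert b S)) : ℕ) < bcCount σ θ S := by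
      rw [hbc, hbc']
      exact orbits_mul_swap_lt hab hnsc
    rw [he]
    push_cast at hbcc ⊢
    have hkk' : (kCount σ θ S : ℤ) ≤ (kCount σ θ (insert a (insert b S)) : ℤ) + 1 := by
      exact_mod_cast hkk
    linarith

end KSide

section Chain
variable {H : Type*} [Fintype H] [DecidableEq H]

private lemma genus_mono (σ θ : Perm H) (hinv : ∀ a, θ (θ a) = a) (hfp : ∀ a, θ a ≠ a) :
    ∀ (n : ℕ) (S T : Finset H), (∀ x ∈ S, θ x ∈ S) → (∀ x ∈ T, θ x ∈ T) → S ⊆ T →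
      (T \ S).card = n →
      2 * (kCount σ θ S : ℤ) + eCount S - (bcCount σ θ S : ℤ) ≤
      2 * (kCount σ θ T : ℤ) + eCount T - (bcCount σ θ T : ℤ) := by
  intro n
  induction n using Nat.strong_induction_on with
  | _ n ih =>
    intro S T hS hT hST hcard
    rcases Finset.eq_empty_or_nonempty (T \ S) with hempty | ⟨a, haTS⟩
    · have : T ⊆ S := by
        intro x hx
        by_contra hxS
        exact (Finset.eq_empty_iff_forall_notMem.1 hempty x) (Finset.mem_sdiff.2 ⟨hx, hxS⟩)
      have hTS : S = T := Finset.Subset.antisymm hST this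
      rw [hTS]
    · obtain ⟨haT, haS⟩ := Finset.mem_sdiff.1 haTS
      have hbT : θ a ∈ T := hT a haT
      have hbS : θ a ∉ S := fun h => haS (by
        have := hS (θ a) h
        rwa [hinv a] at this)
      have hfa : θ a ≠ a := hfp a
      set S' := insert a (insert (θ a) S) with hS'def
      have hS'cl : ∀ x ∈ S', θ x ∈ S' := insert_closed hS hinv a
      have hS'T : S' ⊆ T := by
        intro x hx
        simp only [hS'def, Finset.mem_insert] at hx
        rcases hx with rfl | rfl | hx
        · exact haT
        · exact hbT
        · exact hST hx
      have hproper : T \ S' ⊂ T \ S := by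
        constructor
        · intro x hx
          obtain ⟨hx1, hx2⟩ := Finset.mem_sdiff.1 hx
          exact Finset.mem_sdiff.2 ⟨hx1, fun hxs => hx2 (by simp [hS'def, hxs])⟩
        · intro hsub
          have := hsub haTS
          obtain ⟨_, h2⟩ := Finset.mem_sdiff.1 this
          exact h2 (by simp [hS'def])
      have hlt : (T \ S').card < n := by
        rw [← hcard]
        exact Finset.card_lt_card hproper
      exact le_trans (step_ineq σ θ hinv hS haS hfa hbS)
        (ih _ hlt S' T hS'cl hT hS'T rfl)

private lemma base_eq (σ θ : Perm H) (hinv : ∀ a, θ (θ a) = a) :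
    2 * (kCount σ θ (∅ : Finset H) : ℤ) + eCount (∅ : Finset H)
      - (bcCount σ θ (∅ : Finset H) : ℤ) = (vCount σ : ℤ) := by
  have h1 : restrictPerm θ (∅ : Finset H) = 1 := restrictPerm_empty θ hinv
  have hk : kCount σ θ (∅ : Finset H) = vCount σ := by
    unfold kCount vCount permOrbits
    rw [h1]
    have hgrp : (Subgroup.closure ({σ, (1 : Perm H)} : Set (Perm H))) = Subgroup.zpowers σ := by
      apply le_antisymm
      · rw [Subgroup.closure_le]
        rintro g hg
        rcases hg with rfl | rfl
        · exact Subgroup.mem_zpowers g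
        · exact Subgroup.one_mem _
      · rw [Subgroup.zpowers_eq_closure]
        exact Subgroup.closure_mono (by simp)
    rw [hgrp]
  have hbc : bcCount σ θ (∅ : Finset H) = vCount σ := by
    unfold bcCount vCount
    rw [h1, mul_one]
  have he : eCount (∅ : Finset H) = 0 := by simp [eCount]
  rw [hk, hbc, he]
  ring

private lemma euler_formula (σ θ : Perm H) (hinv : ∀ a, θ (θ a) = a) (hfp : ∀ a, θ a ≠ a)
    (hgenus : (kCount σ θ (Finset.univ : Finset H) : ℤ) -
        (bcCount σ θ (Finset.univ : Finset H) : ℤ) +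
        nCount σ θ (Finset.univ : Finset H) = 0)
    {S : Finset H} (hS : ∀ x ∈ S, θ x ∈ S) :
    (bcCount σ θ S : ℤ) = eCount S + 2 * (kCount σ θ S : ℤ) - (vCount σ : ℤ) := by
  have hempty : ∀ x ∈ (∅ : Finset H), θ x ∈ (∅ : Finset H) := by simp
  have huniv : ∀ x ∈ (Finset.univ : Finset H), θ x ∈ (Finset.univ : Finset H) := by simp
  have h1 := genus_mono σ θ hinv hfp ((S \ ∅).card) ∅ S hempty hS (Finset.empty_subset S) rfl
  have h2 := genus_mono σ θ hinv hfp ((Finset.univ \ S).card) S Finset.univ hS huniv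
    (Finset.subset_univ S) rfl
  have hbase := base_eq σ θ hinv
  have htop : 2 * (kCount σ θ (Finset.univ : Finset H) : ℤ) + eCount (Finset.univ : Finset H)
      - (bcCount σ θ (Finset.univ : Finset H) : ℤ) = (vCount σ : ℤ) := by
    unfold nCount rCount at hgenus
    linarith
  linarith

end Chain

section Algebra
variable {K : Type*} [Field K]

private lemma comb_ud {u d : K} (hu : u ≠ 0) (hd : d ≠ 0) (a b c f g h : ℤ) :
    (u ^ a * d ^ b) * ((u ^ c * d ^ f) * (u ^ g * d ^ h)) = u ^ (a + c + g) * d ^ (b + f + h) := by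
  rw [zpow_add₀ hu, zpow_add₀ hu, zpow_add₀ hd, zpow_add₀ hd]
  ring

private lemma zpow_congr {u : K} {m n : ℤ} (h : m = n) : u ^ m = u ^ n := by rw [h]

end Algebra

/-- **Corollary 4.2, planar case** (Thistlethwaite's relation).  For an orientable
ribbon graph encoded by a combinatorial map `(H, σ, θ)` of genus zero (i.e. with
`k(E) - bc(E) + n(E) = 0`), with `u = t^{1/4}`, `t = u⁴`, `d = -u² - u⁻²`, and any
integer `w` (the writhe), the Jones polynomial `(-1)^w u^{3w} ⟨L⟩(u⁻¹, u, d)` equals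
`(-1)^w t^{(3w - r(G) + n(G))/4} d^{k(G)-1} · T_Γ(-t, -t⁻¹)`, where the Tutte
polynomial of the core graph `Γ` is given by its Whitney rank subset expansion. -/
theorem jones_polynomial_eq_tutte_planar
    {H : Type*} [Fintype H] [DecidableEq H] (σ θ : Equiv.Perm H)
    (hinv : ∀ a, θ (θ a) = a) (hfp : ∀ a, θ a ≠ a)
    (hgenus : (kCount σ θ (Finset.univ : Finset H) : ℤ) -
        (bcCount σ θ (Finset.univ : Finset H) : ℤ) +
        nCount σ θ (Finset.univ : Finset H) = 0)
    {K : Type*} [Field K] (u t d : K) (hu : u ≠ 0) (hu4 : u ^ 4 ≠ -1)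
    (ht : t = u ^ 4) (hdef : d = -u ^ 2 - u ^ (-2 : ℤ))
    (w : ℤ) :
    (-1 : K) ^ w * u ^ (3 * w) *
      ∑ S ∈ spanningSets θ,
        u ^ (eCount (Finset.univ : Finset H) - 2 * eCount S) *
          d ^ ((bcCount σ θ S : ℤ) - 1)
      =
    (-1 : K) ^ w *
      u ^ (3 * w - rCount σ θ (Finset.univ : Finset H) + nCount σ θ (Finset.univ : Finset H)) *
      d ^ ((kCount σ θ (Finset.univ : Finset H) : ℤ) - 1) *
      ∑ S ∈ spanningSets θ,
        (-t - 1) ^ (rCount σ θ (Finset.univ : Finset H) - rCount σ θ S) *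
        (-t⁻¹ - 1) ^ nCount σ θ S := by
  classical
  have hcancel : u ^ (2:ℤ) * u ^ ((-2):ℤ) = 1 := by
    rw [← zpow_add₀ hu]; norm_num
  have e1 : u ^ (2:ℤ) * u ^ (2:ℕ) = u ^ (4:ℕ) := by
    rw [← zpow_natCast u 2, ← zpow_natCast u 4, ← zpow_add₀ hu]; norm_num
  have hA : -t - 1 = u ^ (2:ℤ) * d := by
    rw [ht, hdef]
    calc -u ^ 4 - 1 = -(u ^ (2:ℤ) * u ^ (2:ℕ)) - (u ^ (2:ℤ) * u ^ ((-2):ℤ)) := by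
          rw [e1, hcancel]
      _ = u ^ (2:ℤ) * (-u ^ 2 - u ^ ((-2):ℤ)) := by ring
  have e2 : (u ^ (4:ℕ))⁻¹ = u ^ ((-4):ℤ) := by
    rw [← zpow_natCast u 4, ← zpow_neg]
    norm_num
  have e3 : u ^ ((-2):ℤ) * u ^ ((-2):ℤ) = u ^ ((-4):ℤ) := by
    rw [← zpow_add₀ hu]; norm_num
  have e4 : u ^ ((-2):ℤ) * u ^ (2:ℕ) = 1 := by
    rw [← zpow_natCast u 2, ← zpow_add₀ hu]; norm_num
  have hB : -t⁻¹ - 1 = u ^ ((-2):ℤ) * d := by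
    rw [ht, hdef, e2]
    calc -u ^ ((-4):ℤ) - 1
        = -(u ^ ((-2):ℤ) * u ^ ((-2):ℤ)) - (u ^ ((-2):ℤ) * u ^ (2:ℕ)) := by rw [e3, e4]
      _ = u ^ ((-2):ℤ) * (-u ^ 2 - u ^ ((-2):ℤ)) := by ring
  have hd : d ≠ 0 := by
    intro h0
    apply hu4
    have h1 : -t - 1 = 0 := by rw [hA, h0, mul_zero]
    rw [ht] at h1
    linear_combination -h1
  have hspan : ∀ S ∈ spanningSets θ, ∀ x ∈ S, θ x ∈ S := by
    intro S hSmem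
    exact (Finset.mem_filter.1 hSmem).2
  have hterm : ∀ S ∈ spanningSets θ,
      u ^ (eCount (Finset.univ : Finset H) - 2 * eCount S) * d ^ ((bcCount σ θ S : ℤ) - 1) =
      u ^ (nCount σ θ (Finset.univ : Finset H) - rCount σ θ (Finset.univ : Finset H)) *
        d ^ ((kCount σ θ (Finset.univ : Finset H) : ℤ) - 1) *
        ((-t - 1) ^ (rCount σ θ (Finset.univ : Finset H) - rCount σ θ S) *
          (-t⁻¹ - 1) ^ nCount σ θ S) := by
    intro S hSmem
    have hbcS := euler_formula σ θ hinv hfp hgenus (hspan S hSmem)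
    rw [hA, hB, mul_zpow, mul_zpow, ← zpow_mul, ← zpow_mul, hbcS, comb_ud hu hd]
    congr 1
    · apply zpow_congr
      unfold nCount rCount
      ring
    · apply zpow_congr
      unfold nCount rCount
      ring
  rw [Finset.sum_congr rfl hterm, ← Finset.mul_sum]
  have hsplit : u ^ (3 * w - rCount σ θ (Finset.univ : Finset H)
        + nCount σ θ (Finset.univ : Finset H)) =
      u ^ (3 * w) * u ^ (nCount σ θ (Finset.univ : Finset H)
        - rCount σ θ (Finset.univ : Finset H)) := by
    rw [← zpow_add₀ hu]
    apply zpow_congr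
    ring
  rw [hsplit]
  ring
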